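/- (Main Theorem.) Let V and E be finite types with maps s, r : E → V and adjacency matrix A. Then the Parry–Sullivan number det(1 − A) equals Σ_D (−1)^{c(D)}, the sum ranging over all circuit configurations D; that is, det(1 − A) equals the number of vertex-disjoint sets of circuits of even size minus the number of vertex-disjoint sets of circuits of odd size (where circuit configurations D correspond bijectively to vertex-disjoint sets of circuits, the size of the set being c(D), and the empty configuration is included). -/

import Mathlib

open scoped Classical

/-- The adjacency matrix of the finite directed multigraph with vertices `V`, edges `E`,
source map `s` and range map `r`: the `(v, w)` entry is the number of edges from `v` to `w`. -/
noncomputable def adjMatrix {V E : Type*} (s r : E → V) : Matrix V V ℤ :=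
  Matrix.of fun v w => (Nat.card {e : E // s e = v ∧ r e = w} : ℤ)

/-- A circuit configuration: a finset of edges on which `s` and `r` are injective and
whose `s`-image equals its `r`-image.  Such finsets are precisely the unions of the
circuits of vertex-disjoint sets of directed circuits. -/
def IsCircuitConfig {V E : Type*} [DecidableEq V] (s r : E → V) (D : Finset E) : Prop :=
  Set.InjOn s ↑D ∧ Set.InjOn r ↑D ∧ D.image s = D.image r

/-- `ρ` is the permutation induced by the finset of edges `D`: it sends `s e` to `r e`
for each `e ∈ D` and fixes every vertex outside the `s`-image of `D`. -/
def Induces {V E : Type*} [DecidableEq V] (s r : E → V) (D : Finset E)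
    (ρ : Equiv.Perm V) : Prop :=
  (∀ e ∈ D, ρ (s e) = r e) ∧ ∀ v ∉ D.image s, ρ v = v

/-- The permutation induced by a circuit configuration `D` (the identity if no
permutation is induced by `D`). -/
noncomputable def inducedPerm {V E : Type*} [DecidableEq V] (s r : E → V)
    (D : Finset E) : Equiv.Perm V :=
  if h : ∃ ρ : Equiv.Perm V, Induces s r D ρ then h.choose else 1

/-- The setoid on `V` whose classes are the orbits of the permutation `ρ`. -/
def sameCycleSetoid {V : Type*} (ρ : Equiv.Perm V) : Setoid V where
  r := ρ.SameCycle
  iseqv := ⟨fun x => Equiv.Perm.SameCycle.refl ρ x,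
    Equiv.Perm.SameCycle.symm, Equiv.Perm.SameCycle.trans⟩

/-- The number of circuits of a configuration `D` with induced permutation `ρ`:
the number of orbits of `ρ` that meet the `s`-image of `D`. -/
noncomputable def numCircuits {V E : Type*} (s : E → V) (D : Finset E)
    (ρ : Equiv.Perm V) : ℕ :=
  (Quotient.mk (sameCycleSetoid ρ) '' (s '' ↑D)).ncard

/-! ### Auxiliary lemmas -/

set_option linter.unusedSectionVars false

section Aux

variable {V E : Type*} [Fintype V] [Fintype E] [DecidableEq V]

lemma PS.ncard_orbits (ρ : Equiv.Perm V) (S : Finset V)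
    (hfix : ∀ v ∉ S, ρ v = v) :
    (Quotient.mk (sameCycleSetoid ρ) '' ↑S).ncard
      = ρ.cycleFactorsFinset.card + (S \ ρ.support).card := by
  have hsupp : ρ.support ⊆ S := fun v hv => by
    by_contra h; exact (Equiv.Perm.mem_support.1 hv) (hfix v h)
  set Φ : V → Equiv.Perm V ⊕ V :=
    fun v => if v ∈ ρ.support then Sum.inl (ρ.cycleOf v) else Sum.inr v with hΦ
  have hfixed : ∀ a b : V, ρ.SameCycle a b → a ∉ ρ.support → b = a := by
    intro a b hab ha
    obtain ⟨n, hn⟩ := hab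
    rw [← hn]
    have : ρ a = a := by simpa using ha
    exact Equiv.Perm.zpow_apply_eq_self_of_apply_eq_self this n
  have hresp : ∀ a b : V, ρ.SameCycle a b → Φ a = Φ b := by
    intro a b hab
    by_cases ha : a ∈ ρ.support
    · have hb : b ∈ ρ.support := by
        by_contra hb
        have h2 : a = b := hfixed b a hab.symm hb
        exact hb (h2 ▸ ha)
      simp only [hΦ]
      rw [if_pos ha, if_pos hb, hab.cycleOf_eq]
    · rw [hfixed a b hab ha]
  have hinj : Set.InjOn (Quotient.lift Φ hresp)
      (Quotient.mk (sameCycleSetoid ρ) '' ↑S) := by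
    rintro q₁ ⟨v₁, hv₁, rfl⟩ q₂ ⟨v₂, hv₂, rfl⟩ h
    change Φ v₁ = Φ v₂ at h
    refine Quotient.sound ?_
    show ρ.SameCycle v₁ v₂
    by_cases h₁ : v₁ ∈ ρ.support <;> by_cases h₂ : v₂ ∈ ρ.support <;>
      simp only [hΦ, h₁, h₂, if_pos, if_neg, if_true, if_false] at h
    · simp only [Sum.inl.injEq] at h
      have hv : v₂ ∈ (ρ.cycleOf v₂).support :=
        Equiv.Perm.mem_support_cycleOf_iff.2 ⟨Equiv.Perm.SameCycle.refl _ _, h₂⟩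
      rw [← h] at hv
      exact (Equiv.Perm.mem_support_cycleOf_iff.1 hv).1
    · simp at h
    · simp at h
    · simp only [Sum.inr.injEq] at h
      exact h ▸ Equiv.Perm.SameCycle.refl _ _
  have himg : (Quotient.lift Φ hresp) '' (Quotient.mk (sameCycleSetoid ρ) '' ↑S)
      = Φ '' ↑S := by
    rw [← Set.image_comp]; rfl
  have h1 : (Quotient.mk (sameCycleSetoid ρ) '' (↑S : Set V)).ncard = (Φ '' ↑S).ncard := by
    rw [← himg, Set.ncard_image_of_injOn hinj]
  rw [h1, ← Finset.coe_image, Set.ncard_coe_finset]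
  have himg2 : S.image Φ
      = (ρ.cycleFactorsFinset.image Sum.inl) ∪ ((S \ ρ.support).image Sum.inr) := by
    ext x
    simp only [Finset.mem_image, Finset.mem_union, Finset.mem_sdiff]
    constructor
    · rintro ⟨v, hv, rfl⟩
      by_cases h : v ∈ ρ.support
      · exact Or.inl ⟨ρ.cycleOf v, Equiv.Perm.cycleOf_mem_cycleFactorsFinset_iff.2 h,
          by simp only [hΦ]; rw [if_pos h]⟩
      · exact Or.inr ⟨v, ⟨hv, h⟩, by simp only [hΦ]; rw [if_neg h]⟩
    · rintro (⟨c, hc, rfl⟩ | ⟨w, ⟨hw, hw2⟩, rfl⟩)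
      · have hcyc := (Equiv.Perm.mem_cycleFactorsFinset_iff.1 hc)
        have hne : c.support.Nonempty := by
          rw [Finset.nonempty_iff_ne_empty, Ne, Equiv.Perm.support_eq_empty_iff]
          exact hcyc.1.ne_one
        obtain ⟨a, ha⟩ := hne
        have haρ : a ∈ ρ.support := by
          rw [Equiv.Perm.mem_support, ← hcyc.2 a ha]
          exact Equiv.Perm.mem_support.1 ha
        refine ⟨a, hsupp haρ, ?_⟩
        rw [hΦ]
        simp only [haρ, if_true]
        rw [← Equiv.Perm.cycle_is_cycleOf ha hc]
      · exact ⟨w, hw, by simp only [hΦ]; rw [if_neg hw2]⟩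
  rw [himg2, Finset.card_union_of_disjoint, Finset.card_image_of_injective _ Sum.inl_injective,
    Finset.card_image_of_injective _ Sum.inr_injective]
  rw [Finset.disjoint_left]
  rintro x hx hx'
  obtain ⟨c, -, rfl⟩ := Finset.mem_image.1 hx
  obtain ⟨w, -, h⟩ := Finset.mem_image.1 hx'
  exact absurd h (by simp)

lemma PS.sign_eq_pow (ρ : Equiv.Perm V) (S : Finset V)
    (hfix : ∀ v ∉ S, ρ v = v) :
    ((Equiv.Perm.sign ρ : ℤˣ) : ℤ)
      = (-1) ^ (S.card + (Quotient.mk (sameCycleSetoid ρ) '' ↑S).ncard) := by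
  have hsupp : ρ.support ⊆ S := fun v hv => by
    by_contra h; exact (Equiv.Perm.mem_support.1 hv) (hfix v h)
  rw [PS.ncard_orbits ρ S hfix]
  have hcard : Multiset.card ρ.cycleType = ρ.cycleFactorsFinset.card := by
    simp [Equiv.Perm.cycleType_def]
  have h2 : (S \ ρ.support).card + ρ.support.card = S.card :=
    Finset.card_sdiff_add_card_eq_card hsupp
  have hsign := Equiv.Perm.sign_of_cycleType ρ
  rw [Equiv.Perm.sum_cycleType, hcard] at hsign
  have hexp : S.card + (ρ.cycleFactorsFinset.card + (S \ ρ.support).card)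
      = ρ.support.card + ρ.cycleFactorsFinset.card + 2 * (S \ ρ.support).card := by omega
  rw [hexp, hsign]
  push_cast
  rw [pow_add, pow_add, pow_mul]
  norm_num
  rw [← pow_add]

lemma PS.induces_unique (s r : E → V) (D : Finset E) {ρ₁ ρ₂ : Equiv.Perm V}
    (h₁ : Induces s r D ρ₁) (h₂ : Induces s r D ρ₂) : ρ₁ = ρ₂ := by
  ext v
  by_cases hv : v ∈ D.image s
  · obtain ⟨e, he, rfl⟩ := Finset.mem_image.1 hv
    rw [h₁.1 e he, h₂.1 e he]
  · rw [h₁.2 v hv, h₂.2 v hv]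

lemma PS.exists_induces (s r : E → V) (D : Finset E) (hD : IsCircuitConfig s r D) :
    Induces s r D (inducedPerm s r D) := by
  obtain ⟨hs, hr, him⟩ := hD
  have hcons : ∃ ρ : Equiv.Perm V, Induces s r D ρ := by
    have hes : Function.Bijective
        (fun e : {e // e ∈ D} =>
          (⟨s e.1, Finset.mem_image_of_mem s e.2⟩ : {v // v ∈ D.image s})) := by
      constructor
      · intro e₁ e₂ h
        exact Subtype.ext (hs (Finset.mem_coe.2 e₁.2) (Finset.mem_coe.2 e₂.2)
          (congrArg Subtype.val h))
      · rintro ⟨v, hv⟩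
        obtain ⟨e, he, hev⟩ := Finset.mem_image.1 hv
        exact ⟨⟨e, he⟩, Subtype.ext hev⟩
    have her : Function.Bijective
        (fun e : {e // e ∈ D} => (⟨r e.1, him ▸ Finset.mem_image_of_mem r e.2⟩ :
          {v // v ∈ D.image s})) := by
      constructor
      · intro e₁ e₂ h
        exact Subtype.ext (hr (Finset.mem_coe.2 e₁.2) (Finset.mem_coe.2 e₂.2)
          (congrArg Subtype.val h))
      · rintro ⟨v, hv⟩
        rw [him] at hv
        obtain ⟨e, he, hev⟩ := Finset.mem_image.1 hv
        exact ⟨⟨e, he⟩, Subtype.ext hev⟩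
    set π : Equiv.Perm {v // v ∈ D.image s} :=
      (Equiv.ofBijective _ hes).symm.trans (Equiv.ofBijective _ her) with hπ
    refine ⟨π.extendDomain (Equiv.refl {v : V // v ∈ D.image s}), ?_, ?_⟩
    · intro e he
      have h1 : s e ∈ D.image s := Finset.mem_image_of_mem s he
      rw [Equiv.Perm.extendDomain_apply_subtype π (Equiv.refl {v : V // v ∈ D.image s}) h1]
      have h2 : (Equiv.ofBijective _ hes).symm ⟨s e, h1⟩ = ⟨e, he⟩ := by
        rw [Equiv.symm_apply_eq]
        rfl
      simp only [hπ, Equiv.trans_apply, Equiv.refl_apply, Equiv.refl_symm]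
      rw [h2]
      rfl
    · intro v hv
      exact Equiv.Perm.extendDomain_apply_not_subtype π
        (Equiv.refl {v : V // v ∈ D.image s}) hv
  rw [inducedPerm, dif_pos hcons]
  exact hcons.choose_spec

/-- The finset of "choices" at a vertex `v`: either skip (only allowed when `w = v`),
or pick an edge from `v` to `w`. -/
noncomputable def PS.Tfin (s r : E → V) (v w : V) : Finset (Unit ⊕ E) :=
  (if w = v then ({()} : Finset Unit) else ∅).disjSum
    (Finset.univ.filter fun e => s e = v ∧ r e = w)

/-- The weight of a choice. -/
def PS.wt : Unit ⊕ E → ℤ := Sum.elim (fun _ => 1) (fun _ => -1)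

lemma PS.sum_wt (s r : E → V) (v w : V) :
    ∑ x ∈ PS.Tfin s r v w, PS.wt x = (1 - adjMatrix s r) v w := by
  rw [PS.Tfin, Finset.sum_disjSum]
  have h1 : adjMatrix s r v w = ((Finset.univ.filter fun e => s e = v ∧ r e = w).card : ℤ) := by
    simp [adjMatrix, Nat.card_eq_fintype_card, Fintype.card_subtype]
  rw [Matrix.sub_apply, Matrix.one_apply, h1]
  simp only [PS.wt, Sum.elim_inl, Sum.elim_inr, Finset.sum_const, smul_eq_mul, mul_one,
    mul_neg_one]
  by_cases h : w = v
  · rw [if_pos h, if_pos h.symm]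
    simp
    ring
  · rw [if_neg h, if_neg (Ne.symm h)]
    simp

/-- The configuration determined by a system of choices. -/
noncomputable def PS.confOf (s r : E → V) (p : V → Unit ⊕ E) : Finset E :=
  Finset.univ.filter fun e => p (s e) = Sum.inr e

/-- The system of choices determined by a configuration. -/
noncomputable def PS.pOf (s : E → V) (D : Finset E) : V → Unit ⊕ E :=
  fun v => if h : ∃ e ∈ D, s e = v then Sum.inr h.choose else Sum.inl ()

lemma PS.confOf_spec (s r : E → V) (σ : Equiv.Perm V) (p : V → Unit ⊕ E)
    (hp : ∀ v, p v ∈ PS.Tfin s r v (σ v)) :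
    IsCircuitConfig s r (PS.confOf s r p) ∧ Induces s r (PS.confOf s r p) σ ∧
      (PS.confOf s r p).image s = Finset.univ.filter (fun v => (p v).isRight) := by
  have hmem : ∀ v e, p v = Sum.inr e → s e = v ∧ r e = σ v := by
    intro v e h
    have h2 := hp v
    rw [h, PS.Tfin, Finset.inr_mem_disjSum, Finset.mem_filter] at h2
    exact h2.2
  have hfixl : ∀ v, ¬(p v).isRight → σ v = v := by
    intro v h
    rcases hpv : p v with u | e
    · have h2 := hp v
      rw [hpv, PS.Tfin, Finset.inl_mem_disjSum] at h2
      by_contra hσ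
      rw [if_neg hσ] at h2
      exact absurd h2 (Finset.notMem_empty _)
    · rw [hpv] at h; simp at h
  have hDe : ∀ e, e ∈ PS.confOf s r p ↔ p (s e) = Sum.inr e := fun e => by
    simp [PS.confOf]
  have hS : (PS.confOf s r p).image s = Finset.univ.filter (fun v => (p v).isRight) := by
    ext v
    simp only [Finset.mem_image, Finset.mem_filter, Finset.mem_univ, true_and]
    constructor
    · rintro ⟨e, he, rfl⟩
      rw [(hDe e).1 he]; rfl
    · intro h
      rcases hpv : p v with u | e
      · rw [hpv] at h; simp at h
      · have h2 := hmem v e hpv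
        exact ⟨e, (hDe e).2 (by rw [h2.1, hpv]), h2.1⟩
  have hinj_s : Set.InjOn s ↑(PS.confOf s r p) := by
    intro e₁ h₁ e₂ h₂ h
    have h3 := (hDe e₁).1 (Finset.mem_coe.1 h₁)
    rw [h, (hDe e₂).1 (Finset.mem_coe.1 h₂)] at h3
    exact Sum.inr_injective h3.symm
  have hfix : ∀ v ∉ (PS.confOf s r p).image s, σ v = v := by
    intro v hv
    apply hfixl
    rw [hS] at hv
    simpa using hv
  have hind : ∀ e ∈ PS.confOf s r p, σ (s e) = r e := fun e he =>
    ((hmem (s e) e ((hDe e).1 he)).2).symm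
  have hinj_r : Set.InjOn r ↑(PS.confOf s r p) := by
    intro e₁ h₁ e₂ h₂ h
    apply hinj_s h₁ h₂
    apply σ.injective
    rw [hind e₁ (Finset.mem_coe.1 h₁), hind e₂ (Finset.mem_coe.1 h₂), h]
  have him : (PS.confOf s r p).image s = (PS.confOf s r p).image r := by
    have h1 : (PS.confOf s r p).image r = ((PS.confOf s r p).image s).image σ := by
      rw [Finset.image_image]
      exact Finset.image_congr fun e he => (hind e he).symm
    have h2 : ((PS.confOf s r p).image s).image σ = (PS.confOf s r p).image s := by
      apply Finset.eq_of_subset_of_card_le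
      · intro v hv
        obtain ⟨w, hw, rfl⟩ := Finset.mem_image.1 hv
        by_contra h
        have h3 : σ w = w := σ.injective (hfix _ h)
        rw [h3] at h
        exact h hw
      · rw [Finset.card_image_of_injective _ σ.injective]
    rw [h1, h2]
  exact ⟨⟨hinj_s, hinj_r, him⟩, ⟨hind, hfix⟩, hS⟩

lemma PS.pOf_spec (s r : E → V) (D : Finset E) (hD : IsCircuitConfig s r D) :
    (∀ v, PS.pOf s D v ∈ PS.Tfin s r v (inducedPerm s r D v)) ∧
      PS.confOf s r (PS.pOf s D) = D := by
  have hind := PS.exists_induces s r D hD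
  constructor
  · intro v
    rw [PS.pOf]
    by_cases h : ∃ e ∈ D, s e = v
    · rw [dif_pos h]
      obtain ⟨he, hse⟩ := h.choose_spec
      rw [PS.Tfin, Finset.inr_mem_disjSum, Finset.mem_filter]
      refine ⟨Finset.mem_univ _, hse, ?_⟩
      rw [← hind.1 _ he, hse]
    · rw [dif_neg h]
      rw [PS.Tfin, Finset.inl_mem_disjSum]
      have hv : v ∉ D.image s := by
        intro hv
        obtain ⟨e, he, hse⟩ := Finset.mem_image.1 hv
        exact h ⟨e, he, hse⟩
      rw [if_pos (hind.2 v hv)]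
      exact Finset.mem_singleton_self _
  · ext e
    simp only [PS.confOf, Finset.mem_filter, Finset.mem_univ, true_and]
    constructor
    · intro h
      rw [PS.pOf] at h
      by_cases hex : ∃ e' ∈ D, s e' = s e
      · rw [dif_pos hex] at h
        exact (Sum.inr_injective h) ▸ hex.choose_spec.1
      · rw [dif_neg hex] at h
        exact absurd h (by simp)
    · intro he
      rw [PS.pOf]
      have hex : ∃ e' ∈ D, s e' = s e := ⟨e, he, rfl⟩
      rw [dif_pos hex]
      obtain ⟨he', hse'⟩ := hex.choose_spec
      congr 1
      exact hD.1 (Finset.mem_coe.2 he') (Finset.mem_coe.2 he) hse'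

lemma PS.prod_wt (p : V → Unit ⊕ E) :
    (∏ v, PS.wt (p v)) = (-1 : ℤ) ^ (Finset.univ.filter fun v => (p v).isRight).card := by
  rw [← Finset.prod_filter_mul_prod_filter_not Finset.univ (fun v => (p v).isRight)]
  have h1 : ∀ v ∈ Finset.univ.filter (fun v => (p v).isRight), PS.wt (p v) = -1 := by
    intro v hv
    rcases h : p v with u | e
    · rw [Finset.mem_filter, h] at hv; simp at hv
    · rfl
  have h2 : ∀ v ∈ Finset.univ.filter (fun v => ¬(p v).isRight), PS.wt (p v) = 1 := by
    intro v hv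
    rcases h : p v with u | e
    · rfl
    · rw [Finset.mem_filter, h] at hv; simp at hv
  rw [Finset.prod_congr rfl h1, Finset.prod_congr rfl h2, Finset.prod_const,
    Finset.prod_const, one_pow, mul_one]

end Aux

/-- Main theorem: the Parry–Sullivan number `det (1 - A)` of a finite directed multigraph
equals `∑ D, (-1) ^ c(D)` over all circuit configurations `D`; that is, it equals the
number of vertex-disjoint sets of circuits of even size minus the number of
vertex-disjoint sets of circuits of odd size. -/
theorem parry_sullivan_eq_signed_circuit_count {V E : Type*} [Fintype V] [Fintype E]
    [DecidableEq V] (s r : E → V) :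
    (Matrix.det ((1 : Matrix V V ℤ) - adjMatrix s r) =
      ∑ D ∈ Finset.univ.filter (fun D : Finset E => IsCircuitConfig s r D),
        (-1 : ℤ) ^ numCircuits s D (inducedPerm s r D)) ∧
    (Matrix.det ((1 : Matrix V V ℤ) - adjMatrix s r) =
      ((Finset.univ.filter (fun D : Finset E =>
          IsCircuitConfig s r D ∧ Even (numCircuits s D (inducedPerm s r D)))).card : ℤ) -
      ((Finset.univ.filter (fun D : Finset E =>
          IsCircuitConfig s r D ∧ Odd (numCircuits s D (inducedPerm s r D)))).card : ℤ)) := by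
  have hmain : Matrix.det ((1 : Matrix V V ℤ) - adjMatrix s r) =
      ∑ D ∈ Finset.univ.filter (fun D : Finset E => IsCircuitConfig s r D),
        (-1 : ℤ) ^ numCircuits s D (inducedPerm s r D) := by
    rw [← Matrix.det_transpose, Matrix.det_apply']
    simp only [Int.cast_id]
    have hrow : ∀ σ : Equiv.Perm V,
        (∏ i, ((1 : Matrix V V ℤ) - adjMatrix s r).transpose (σ i) i)
          = ∑ p ∈ Fintype.piFinset (fun v => PS.Tfin s r v (σ v)), ∏ v, PS.wt (p v) := by
      intro σ
      rw [← Finset.prod_univ_sum]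
      exact Finset.prod_congr rfl fun v _ => by
        rw [Matrix.transpose_apply, ← PS.sum_wt]
    calc
      ∑ σ : Equiv.Perm V, ((Equiv.Perm.sign σ : ℤˣ) : ℤ) *
            ∏ i, ((1 : Matrix V V ℤ) - adjMatrix s r).transpose (σ i) i
        = ∑ x ∈ (Finset.univ : Finset (Equiv.Perm V)).sigma
              (fun σ => Fintype.piFinset (fun v => PS.Tfin s r v (σ v))),
            ((Equiv.Perm.sign x.1 : ℤˣ) : ℤ) * ∏ v, PS.wt (x.2 v) := by
          rw [Finset.sum_sigma]
          refine Finset.sum_congr rfl fun σ _ => ?_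
          rw [hrow σ, Finset.mul_sum]
      _ = ∑ D ∈ Finset.univ.filter (fun D : Finset E => IsCircuitConfig s r D),
            (-1 : ℤ) ^ numCircuits s D (inducedPerm s r D) := by
          refine Finset.sum_nbij' (fun x => PS.confOf s r x.2)
            (fun D => ⟨inducedPerm s r D, PS.pOf s D⟩) ?_ ?_ ?_ ?_ ?_
          · rintro ⟨σ, p⟩ hx
            have hp : ∀ v, p v ∈ PS.Tfin s r v (σ v) :=
              Fintype.mem_piFinset.1 (Finset.mem_sigma.1 hx).2
            exact Finset.mem_filter.2 ⟨Finset.mem_univ _, (PS.confOf_spec s r σ p hp).1⟩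
          · intro D hD
            have hcfg : IsCircuitConfig s r D := (Finset.mem_filter.1 hD).2
            exact Finset.mem_sigma.2 ⟨Finset.mem_univ _,
              Fintype.mem_piFinset.2 (PS.pOf_spec s r D hcfg).1⟩
          · rintro ⟨σ, p⟩ hx
            have hp : ∀ v, p v ∈ PS.Tfin s r v (σ v) :=
              Fintype.mem_piFinset.1 (Finset.mem_sigma.1 hx).2
            obtain ⟨hcfg, hindσ, hS⟩ := PS.confOf_spec s r σ p hp
            have h1 : inducedPerm s r (PS.confOf s r p) = σ :=
              PS.induces_unique s r _ (PS.exists_induces s r _ hcfg) hindσ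
            have h2 : PS.pOf s (PS.confOf s r p) = p := by
              funext v
              rw [PS.pOf]
              by_cases h : ∃ e ∈ PS.confOf s r p, s e = v
              · rw [dif_pos h]
                obtain ⟨he, hse⟩ := h.choose_spec
                have h3 : p (s h.choose) = Sum.inr h.choose :=
                  (Finset.mem_filter.1 he).2
                rw [hse] at h3
                exact h3.symm
              · rw [dif_neg h]
                rcases hpv : p v with u | e
                · cases u; rfl
                · exfalso
                  have h4 := hp v
                  rw [hpv, PS.Tfin, Finset.inr_mem_disjSum, Finset.mem_filter] at h4
                  refine h ⟨e, ?_, h4.2.1⟩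
                  refine Finset.mem_filter.2 ⟨Finset.mem_univ _, ?_⟩
                  rw [h4.2.1, hpv]
            show (⟨inducedPerm s r (PS.confOf s r p), PS.pOf s (PS.confOf s r p)⟩ :
              Σ _ : Equiv.Perm V, V → Unit ⊕ E) = ⟨σ, p⟩
            rw [h1, h2]
          · intro D hD
            exact (PS.pOf_spec s r D (Finset.mem_filter.1 hD).2).2
          · rintro ⟨σ, p⟩ hx
            have hp : ∀ v, p v ∈ PS.Tfin s r v (σ v) :=
              Fintype.mem_piFinset.1 (Finset.mem_sigma.1 hx).2
            obtain ⟨hcfg, hindσ, hS⟩ := PS.confOf_spec s r σ p hp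
            have h1 : inducedPerm s r (PS.confOf s r p) = σ :=
              PS.induces_unique s r _ (PS.exists_induces s r _ hcfg) hindσ
            have hfix : ∀ v ∉ Finset.univ.filter (fun v => (p v).isRight), σ v = v := by
              intro v hv
              rw [← hS] at hv
              exact hindσ.2 v hv
            have hnum : numCircuits s (PS.confOf s r p) σ =
                (Quotient.mk (sameCycleSetoid σ) ''
                  ↑(Finset.univ.filter (fun v => (p v).isRight))).ncard := by
              rw [numCircuits, ← Finset.coe_image, hS]
            rw [h1, hnum, PS.prod_wt p, PS.sign_eq_pow σ _ hfix]
            rw [← pow_add]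
            set a := (Finset.univ.filter (fun v => (p v).isRight)).card
            set b := (Quotient.mk (sameCycleSetoid σ) ''
              ↑(Finset.univ.filter (fun v => (p v).isRight))).ncard
            have : a + b + a = b + 2 * a := by omega
            rw [this, pow_add, pow_mul]
            norm_num
  refine ⟨hmain, ?_⟩
  rw [hmain]
  rw [← Finset.sum_filter_add_sum_filter_not
    (Finset.univ.filter (fun D : Finset E => IsCircuitConfig s r D))
    (fun D => Even (numCircuits s D (inducedPerm s r D)))]
  have he : ∀ D ∈ (Finset.univ.filter (fun D : Finset E => IsCircuitConfig s r D)).filter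
      (fun D => Even (numCircuits s D (inducedPerm s r D))),
      (-1 : ℤ) ^ numCircuits s D (inducedPerm s r D) = 1 := fun D hD =>
    Even.neg_one_pow (Finset.mem_filter.1 hD).2
  have ho : ∀ D ∈ (Finset.univ.filter (fun D : Finset E => IsCircuitConfig s r D)).filter
      (fun D => ¬Even (numCircuits s D (inducedPerm s r D))),
      (-1 : ℤ) ^ numCircuits s D (inducedPerm s r D) = -1 := fun D hD =>
    Odd.neg_one_pow (Nat.not_even_iff_odd.1 (Finset.mem_filter.1 hD).2)
  rw [Finset.sum_congr rfl he, Finset.sum_congr rfl ho, Finset.sum_const, Finset.sum_const,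
    Finset.filter_filter, Finset.filter_filter]
  have hodd : Finset.filter (fun a : Finset E => IsCircuitConfig s r a ∧
      ¬Even (numCircuits s a (inducedPerm s r a))) Finset.univ
      = Finset.filter (fun a : Finset E => IsCircuitConfig s r a ∧
        Odd (numCircuits s a (inducedPerm s r a))) Finset.univ := by
    apply Finset.filter_congr
    intro D _
    simp [Nat.not_even_iff_odd]
  rw [hodd, nsmul_eq_mul, nsmul_eq_mul]
  push_cast
  ring
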